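/- Let 0 < α < 1. For every x ≥ 0 one has 0 ≤ E_{α,1}(-x) ≤ 1 and 0 ≤ E_{α,α}(-x) ≤ α·Γ(2)/Γ(1+α) = α/Γ(1+α). (These are the scalar contraction and stability bounds underlying the estimates ‖S₁(t)‖ ≤ 1 and ‖S₂(t)‖ ≤ αΓ(2)/Γ(1+α) for the fractional semigroups S₁(t) = E_{α,1}(-t^α A), S₂(t) = E_{α,α}(-t^α A) generated by a positive operator A.) -/

import Mathlib

open MeasureTheory Filter Topology Set

/-- The two-parameter Mittag-Leffler function `E_{α,β}(t) = Σ_{k=0}^∞ t^k / Γ(αk + β)`. -/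
noncomputable def mittagLeffler (α β t : ℝ) : ℝ :=
  ∑' k : ℕ, t ^ k / Real.Gamma (α * k + β)

namespace MLbounds

noncomputable def pp (α : ℝ) (n k : ℕ) : ℝ :=
  ∏ j ∈ Finset.range n, (α * k + 1 + j) / ((k : ℝ) + 1 + j)

noncomputable def P (α : ℝ) : ℕ → ℝ → ℝ
  | 0 => fun x => Real.exp (-x)
  | (n+1) => fun x => α * P α n x
      + (1 - α) * (n + 1) * ∫ t in Set.Ioc (0:ℝ) 1, t ^ n * P α n (t * x)

noncomputable def Q (α : ℝ) : ℕ → ℝ → ℝ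
  | 0 => fun x => Real.exp (-x)
  | (n+1) => fun x => α * Q α n x
      + (1 - α) * (n + 1) * ∫ t in Set.Ioc (0:ℝ) 1, t ^ (n+1) * Q α n (t * x)

variable {α : ℝ}

lemma pp_pos (hα0 : 0 < α) (n k : ℕ) : 0 < pp α n k := by
  apply Finset.prod_pos
  intro j _
  apply div_pos <;> positivity

lemma pp_le_one (hα0 : 0 < α) (hα1 : α < 1) (n k : ℕ) : pp α n k ≤ 1 := by
  apply Finset.prod_le_one
  · intro j _; positivity
  · intro j _
    rw [div_le_one (by positivity)]
    have : α * k ≤ (k : ℝ) := by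
      nlinarith [Nat.cast_nonneg (α := ℝ) k]
    linarith

lemma pp_succ (n k : ℕ) :
    pp α (n+1) k = pp α n k * ((α * k + 1 + n) / ((k : ℝ) + 1 + n)) := by
  rw [pp, Finset.prod_range_succ, pp]

lemma integral_Ioc_pow (m : ℕ) : ∫ t in Set.Ioc (0:ℝ) 1, t ^ m = ((m:ℝ) + 1)⁻¹ := by
  rw [← intervalIntegral.integral_of_le zero_le_one, integral_pow]
  simp

section Ihelper

variable {f : ℝ → ℝ}

lemma I_integrable (hc : Continuous f) (m : ℕ) (x : ℝ) :
    IntegrableOn (fun t => t ^ m * f (t * x)) (Set.Ioc (0:ℝ) 1) :=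
  Continuous.integrableOn_Ioc
    ((continuous_pow m).mul (hc.comp (continuous_id.mul continuous_const)))

lemma I_cont (hc : Continuous f) (hb : ∀ x, 0 ≤ f x ∧ f x ≤ Real.exp |x|) (m : ℕ) :
    Continuous fun x => ∫ t in Set.Ioc (0:ℝ) 1, t ^ m * f (t * x) := by
  rw [continuous_iff_continuousAt]
  intro x₀
  have hmem : Set.Ioo (x₀ - 1) (x₀ + 1) ∈ 𝓝 x₀ := Ioo_mem_nhds (by linarith) (by linarith)
  refine ContinuousOn.continuousAt ?_ hmem
  rw [continuousOn_iff_continuous_restrict]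
  set M : ℝ := |x₀| + 1 with hM
  apply continuous_of_dominated (bound := fun _ => Real.exp M)
  · intro x
    exact (((continuous_pow m).mul (hc.comp
      (continuous_id.mul continuous_const))).aestronglyMeasurable)
  · intro x
    refine (ae_restrict_mem measurableSet_Ioc).mono fun t ht => ?_
    have hxM : |(x:ℝ)| ≤ M := by
      have h2 := x.2
      simp only [Set.mem_Ioo] at h2
      rw [hM, abs_le]
      constructor <;> cases' abs_le.1 (le_refl |x₀|) with u v <;>
        nlinarith [neg_abs_le x₀, le_abs_self x₀]
    rw [norm_mul, norm_pow, Real.norm_eq_abs, Real.norm_eq_abs, abs_of_pos ht.1,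
      abs_of_nonneg (hb _).1]
    have h1 : t ^ m ≤ 1 := pow_le_one₀ ht.1.le ht.2
    have h2 : f (t * (x:ℝ)) ≤ Real.exp M := by
      refine ((hb _).2).trans (Real.exp_le_exp.2 ?_)
      rw [abs_mul, abs_of_pos ht.1]
      nlinarith [abs_nonneg (x:ℝ), ht.2, ht.1.le, abs_nonneg x₀]
    calc t ^ m * f (t * (x:ℝ)) ≤ 1 * Real.exp M :=
          mul_le_mul h1 h2 (hb _).1 zero_le_one
      _ = Real.exp M := one_mul _
  · exact integrableOn_const measure_Ioc_lt_top.ne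
  · refine (ae_restrict_mem measurableSet_Ioc).mono fun t _ => ?_
    exact continuous_const.mul (hc.comp (continuous_const.mul continuous_subtype_val))

lemma I_nonneg (hf : ∀ x, 0 ≤ f x) (m : ℕ) (x : ℝ) :
    0 ≤ ∫ t in Set.Ioc (0:ℝ) 1, t ^ m * f (t * x) := by
  apply setIntegral_nonneg measurableSet_Ioc
  intro t ht
  exact mul_nonneg (pow_nonneg ht.1.le m) (hf _)

lemma I_le_exp (hc : Continuous f) (hb : ∀ x, 0 ≤ f x ∧ f x ≤ Real.exp |x|) (m : ℕ) (x : ℝ) :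
    (∫ t in Set.Ioc (0:ℝ) 1, t ^ m * f (t * x)) ≤ ((m:ℝ) + 1)⁻¹ * Real.exp |x| := by
  have h1 : (∫ t in Set.Ioc (0:ℝ) 1, t ^ m * f (t * x)) ≤
      ∫ t in Set.Ioc (0:ℝ) 1, t ^ m * Real.exp |x| := by
    apply setIntegral_mono_on (I_integrable hc m x) ?_ measurableSet_Ioc
    · intro t ht
      have hP : f (t * x) ≤ Real.exp |x| := by
        refine ((hb _).2).trans (Real.exp_le_exp.2 ?_)
        rw [abs_mul, abs_of_pos ht.1]
        nlinarith [abs_nonneg x, ht.2, ht.1.le]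
      exact mul_le_mul_of_nonneg_left hP (pow_nonneg ht.1.le m)
    · exact Continuous.integrableOn_Ioc ((continuous_pow m).mul continuous_const)
  rwa [MeasureTheory.integral_mul_const, integral_Ioc_pow] at h1

lemma I_anti (hc : Continuous f) (hanti : Antitone f) (m : ℕ) {x y : ℝ} (hxy : x ≤ y) :
    (∫ t in Set.Ioc (0:ℝ) 1, t ^ m * f (t * y)) ≤
      ∫ t in Set.Ioc (0:ℝ) 1, t ^ m * f (t * x) := by
  apply setIntegral_mono_on (I_integrable hc m y) (I_integrable hc m x) measurableSet_Ioc
  intro t ht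
  exact mul_le_mul_of_nonneg_left
    (hanti (mul_le_mul_of_nonneg_left hxy ht.1.le)) (pow_nonneg ht.1.le m)

end Ihelper

end MLbounds

namespace MLbounds2
open MLbounds
variable {α : ℝ}

lemma P_props (hα0 : 0 < α) (hα1 : α < 1) (n : ℕ) :
    Continuous (P α n) ∧ (∀ x, 0 ≤ P α n x ∧ P α n x ≤ Real.exp |x|) ∧ Antitone (P α n) := by
  induction n with
  | zero =>
    refine ⟨Real.continuous_exp.comp continuous_neg,
      fun x => ⟨(Real.exp_pos _).le, Real.exp_le_exp.2 (neg_le_abs x)⟩, ?_⟩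
    intro a b hab
    exact Real.exp_le_exp.2 (by linarith)
  | succ n ih =>
    obtain ⟨ihc, ihb, iha⟩ := ih
    have h1α : (0:ℝ) ≤ 1 - α := by linarith
    refine ⟨?_, fun x => ⟨?_, ?_⟩, ?_⟩
    · exact (continuous_const.mul ihc).add (continuous_const.mul (I_cont ihc ihb n))
    · show 0 ≤ α * P α n x + (1 - α) * (n + 1) * ∫ t in Set.Ioc (0:ℝ) 1, t ^ n * P α n (t * x)
      have h2 := (ihb x).1
      have h3 := I_nonneg (f := P α n) (fun y => (ihb y).1) n x
      positivity
    · show α * P α n x + (1 - α) * (n + 1) *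
          (∫ t in Set.Ioc (0:ℝ) 1, t ^ n * P α n (t * x)) ≤ Real.exp |x|
      have h2 := I_le_exp ihc ihb n x
      have h4 : (1 - α) * ((n:ℝ) + 1) *
          (∫ t in Set.Ioc (0:ℝ) 1, t ^ n * P α n (t * x)) ≤
          (1 - α) * ((n:ℝ) + 1) * (((n:ℝ) + 1)⁻¹ * Real.exp |x|) :=
        mul_le_mul_of_nonneg_left h2 (mul_nonneg h1α (by positivity))
      have h5 : (1 - α) * ((n:ℝ) + 1) * (((n:ℝ) + 1)⁻¹ * Real.exp |x|)
          = (1 - α) * Real.exp |x| := by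
        field_simp
      have h6 : α * P α n x ≤ α * Real.exp |x| :=
        mul_le_mul_of_nonneg_left (ihb x).2 hα0.le
      push_cast at h4 h5 ⊢
      linarith
    · intro a b hab
      show α * P α n b + (1 - α) * (n + 1) * (∫ t in Set.Ioc (0:ℝ) 1, t ^ n * P α n (t * b)) ≤
        α * P α n a + (1 - α) * (n + 1) * ∫ t in Set.Ioc (0:ℝ) 1, t ^ n * P α n (t * a)
      have h2 := I_anti ihc iha n hab
      have h3 := iha hab
      have h4 : (0:ℝ) ≤ (1 - α) * ((n:ℝ) + 1) := mul_nonneg h1α (by positivity)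
      push_cast
      nlinarith

lemma Q_props (hα0 : 0 < α) (hα1 : α < 1) (n : ℕ) :
    Continuous (Q α n) ∧ (∀ x, 0 ≤ Q α n x ∧ Q α n x ≤ Real.exp |x|) ∧ Antitone (Q α n) := by
  induction n with
  | zero =>
    refine ⟨Real.continuous_exp.comp continuous_neg,
      fun x => ⟨(Real.exp_pos _).le, Real.exp_le_exp.2 (neg_le_abs x)⟩, ?_⟩
    intro a b hab
    exact Real.exp_le_exp.2 (by linarith)
  | succ n ih =>
    obtain ⟨ihc, ihb, iha⟩ := ih
    have h1α : (0:ℝ) ≤ 1 - α := by linarith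
    refine ⟨?_, fun x => ⟨?_, ?_⟩, ?_⟩
    · exact (continuous_const.mul ihc).add (continuous_const.mul (I_cont ihc ihb (n+1)))
    · show 0 ≤ α * Q α n x + (1 - α) * (n + 1) * ∫ t in Set.Ioc (0:ℝ) 1, t ^ (n+1) * Q α n (t * x)
      have h2 := (ihb x).1
      have h3 := I_nonneg (f := Q α n) (fun y => (ihb y).1) (n+1) x
      positivity
    · show α * Q α n x + (1 - α) * (n + 1) *
          (∫ t in Set.Ioc (0:ℝ) 1, t ^ (n+1) * Q α n (t * x)) ≤ Real.exp |x|
      have h2 := I_le_exp ihc ihb (n+1) x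
      have h4 : (1 - α) * ((n:ℝ) + 1) *
          (∫ t in Set.Ioc (0:ℝ) 1, t ^ (n+1) * Q α n (t * x)) ≤
          (1 - α) * ((n:ℝ) + 1) * (((n:ℝ) + 1 + 1)⁻¹ * Real.exp |x|) := by
        refine mul_le_mul_of_nonneg_left ?_ (mul_nonneg h1α (by positivity))
        convert h2 using 3
        · rfl
        push_cast
        ring
      have hv : ((n:ℝ) + 1) * (((n:ℝ) + 1 + 1)⁻¹) ≤ 1 := by
        rw [mul_inv_le_iff₀ (by positivity)]
        linarith
      have h5 : (1 - α) * ((n:ℝ) + 1) * (((n:ℝ) + 1 + 1)⁻¹ * Real.exp |x|)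
          ≤ (1 - α) * Real.exp |x| := by
        nlinarith [mul_le_mul_of_nonneg_left hv (mul_nonneg h1α (Real.exp_pos |x|).le)]
      have h6 : α * Q α n x ≤ α * Real.exp |x| :=
        mul_le_mul_of_nonneg_left (ihb x).2 hα0.le
      push_cast at h4 h5 ⊢
      linarith
    · intro a b hab
      show α * Q α n b + (1 - α) * (n + 1) * (∫ t in Set.Ioc (0:ℝ) 1, t ^ (n+1) * Q α n (t * b)) ≤
        α * Q α n a + (1 - α) * (n + 1) * ∫ t in Set.Ioc (0:ℝ) 1, t ^ (n+1) * Q α n (t * a)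
      have h2 := I_anti ihc iha (n+1) hab
      have h3 := iha hab
      have h4 : (0:ℝ) ≤ (1 - α) * ((n:ℝ) + 1) := mul_nonneg h1α (by positivity)
      push_cast
      nlinarith

end MLbounds2

namespace MLbounds3
open MLbounds Nat
variable {α : ℝ}

lemma exp_neg_eq_tsum (x : ℝ) : Real.exp (-x) = ∑' k : ℕ, (-x) ^ k / (k ! : ℝ) := by
  rw [Real.exp_eq_exp_ℝ, NormedSpace.exp_eq_tsum_div]

lemma summable_bd {x : ℝ} {u : ℕ → ℝ} (h : ∀ k, ‖u k‖ ≤ |x| ^ k / (k ! : ℝ)) : Summable u :=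
  Summable.of_norm_bounded (Real.summable_pow_div_factorial |x|) h

lemma norm_term_le {x : ℝ} {c : ℕ → ℝ} (hc : ∀ k, |c k| ≤ 1) (k : ℕ) :
    ‖(-x) ^ k * c k / (k ! : ℝ)‖ ≤ |x| ^ k / (k ! : ℝ) := by
  rw [norm_div, norm_mul, norm_pow, norm_neg, Real.norm_eq_abs, Real.norm_eq_abs,
    Real.norm_natCast]
  have h1 : |x| ^ k * |c k| ≤ |x| ^ k := by
    nlinarith [hc k, abs_nonneg (c k), pow_nonneg (abs_nonneg x) k, abs_nonneg x]
  have h2 : (0:ℝ) < (k ! : ℝ) := by positivity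
  exact div_le_div_of_nonneg_right h1 h2.le
  

lemma I_tsum (m : ℕ) {c : ℕ → ℝ} (hc : ∀ k, |c k| ≤ 1) (x : ℝ) :
    (∫ t in Set.Ioc (0:ℝ) 1, t ^ m * ∑' k : ℕ, (-(t*x)) ^ k * c k / (k ! : ℝ)) =
    ∑' k : ℕ, (-x) ^ k * c k / (k ! : ℝ) * ((k:ℝ) + m + 1)⁻¹ := by
  have hcnorm : ∀ k : ℕ, |(-x) ^ k * c k / (k ! : ℝ)| ≤ |x| ^ k / (k ! : ℝ) := by
    intro k
    have := norm_term_le (x := x) hc k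
    rwa [Real.norm_eq_abs] at this
  have hfun : Set.EqOn (fun t : ℝ => t ^ m * ∑' k : ℕ, (-(t*x)) ^ k * c k / (k ! : ℝ))
      (fun t : ℝ => ∑' k : ℕ, t ^ (m+k) * ((-x) ^ k * c k / (k ! : ℝ)))
      (Set.Ioc (0:ℝ) 1) := by
    intro t _
    simp only
    rw [← tsum_mul_left]
    apply tsum_congr
    intro k
    have : (-(t*x)) ^ k = t ^ k * (-x) ^ k := by
      rw [← mul_pow]; ring_nf
    rw [this, pow_add]
    ring
  rw [setIntegral_congr_fun measurableSet_Ioc hfun]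
  have key : (∫ t in Set.Ioc (0:ℝ) 1, ∑' k : ℕ, t ^ (m+k) * ((-x) ^ k * c k / (k ! : ℝ)))
      = ∑' k : ℕ, ∫ t in Set.Ioc (0:ℝ) 1, t ^ (m+k) * ((-x) ^ k * c k / (k ! : ℝ)) := by
    refine (MeasureTheory.integral_tsum_of_summable_integral_norm ?_ ?_).symm
    · intro k
      exact Continuous.integrableOn_Ioc ((continuous_pow _).mul continuous_const)
    · apply summable_bd (x := x)
      intro k
      rw [Real.norm_eq_abs]
      have h0 : (0:ℝ) ≤ ∫ t in Set.Ioc (0:ℝ) 1, ‖t ^ (m+k) * ((-x) ^ k * c k / (k ! : ℝ))‖ :=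
        integral_nonneg fun t => norm_nonneg _
      rw [abs_of_nonneg h0]
      have h1 : (∫ t in Set.Ioc (0:ℝ) 1, ‖t ^ (m+k) * ((-x) ^ k * c k / (k ! : ℝ))‖)
          ≤ ∫ _t in Set.Ioc (0:ℝ) 1, |x| ^ k / (k ! : ℝ) := by
        apply setIntegral_mono_on ?_ ?_ measurableSet_Ioc
        · intro t ht
          rw [norm_mul, norm_pow, Real.norm_eq_abs, abs_of_pos ht.1]
          calc t ^ (m+k) * ‖(-x) ^ k * c k / (k ! : ℝ)‖
              ≤ 1 * (|x| ^ k / (k ! : ℝ)) := by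
                apply mul_le_mul (pow_le_one₀ ht.1.le ht.2) ?_ (norm_nonneg _) zero_le_one
                rw [show ‖(-x) ^ k * c k / (k ! : ℝ)‖ = |(-x) ^ k * c k / (k ! : ℝ)| from rfl]
                exact hcnorm k
            _ = |x| ^ k / (k ! : ℝ) := one_mul _
        · exact (Continuous.integrableOn_Ioc ((continuous_pow _).mul
            continuous_const)).norm
        · exact integrableOn_const measure_Ioc_lt_top.ne
      refine h1.trans ?_
      rw [setIntegral_const]
      simp [Real.volume_Ioc]
  rw [key]
  apply tsum_congr
  intro k
  rw [MeasureTheory.integral_mul_const, integral_Ioc_pow]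
  push_cast
  ring

end MLbounds3

namespace MLbounds4
open MLbounds MLbounds3 Nat
variable {α : ℝ}

lemma pp_abs (hα0 : 0 < α) (hα1 : α < 1) (n : ℕ) : ∀ k, |pp α n k| ≤ 1 := fun k => by
  rw [abs_of_pos (pp_pos hα0 n k)]; exact pp_le_one hα0 hα1 n k

lemma summable_term (hα0 : 0 < α) (hα1 : α < 1) (n : ℕ) (x : ℝ) {c : ℕ → ℝ}
    (hc : ∀ k, |c k| ≤ 1) :
    Summable (fun k : ℕ => (-x) ^ k * c k / (k ! : ℝ)) :=
  summable_bd (fun k => norm_term_le hc k)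

lemma summable_term' (hα0 : 0 < α) (hα1 : α < 1) (n : ℕ) (x : ℝ) {c : ℕ → ℝ}
    (hc : ∀ k, |c k| ≤ 1) :
    Summable (fun k : ℕ => (-x) ^ k * c k / (k ! : ℝ) * ((k:ℝ) + n + 1)⁻¹) := by
  apply summable_bd (x := x)
  intro k
  rw [norm_mul]
  calc ‖(-x) ^ k * c k / (k ! : ℝ)‖ * ‖((k:ℝ) + n + 1)⁻¹‖
      ≤ (|x| ^ k / (k ! : ℝ)) * 1 := by
        apply mul_le_mul (norm_term_le hc k) ?_ (norm_nonneg _) (by positivity)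
        rw [Real.norm_eq_abs, abs_of_pos (by positivity)]
        rw [inv_le_one_iff₀]
        right
        have : (0:ℝ) ≤ (k:ℝ) + n := by positivity
        linarith
    _ = |x| ^ k / (k ! : ℝ) := mul_one _

lemma P_eq_tsum (hα0 : 0 < α) (hα1 : α < 1) (n : ℕ) (x : ℝ) :
    P α n x = ∑' k : ℕ, (-x) ^ k * pp α n k / (k ! : ℝ) := by
  induction n generalizing x with
  | zero =>
    show Real.exp (-x) = _
    rw [exp_neg_eq_tsum]
    apply tsum_congr
    intro k
    rw [pp]
    simp
  | succ n ih =>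
    show α * P α n x + (1 - α) * (n + 1) *
        (∫ t in Set.Ioc (0:ℝ) 1, t ^ n * P α n (t * x)) = _
    have hrw : Set.EqOn (fun t : ℝ => t ^ n * P α n (t * x))
        (fun t : ℝ => t ^ n * ∑' k : ℕ, (-(t*x)) ^ k * pp α n k / (k ! : ℝ))
        (Set.Ioc (0:ℝ) 1) := fun t _ => by simp only [ih]
    rw [setIntegral_congr_fun measurableSet_Ioc hrw, I_tsum n (pp_abs hα0 hα1 n) x, ih x,
      ← tsum_mul_left, ← tsum_mul_left,
      ← Summable.tsum_add ((summable_term hα0 hα1 n x (pp_abs hα0 hα1 n)).mul_left α)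
        ((summable_term' hα0 hα1 n x (pp_abs hα0 hα1 n)).mul_left ((1-α) * (n+1)))]
    apply tsum_congr
    intro k
    rw [pp_succ]
    have hk : ((k:ℝ) + 1 + n) ≠ 0 := by positivity
    have hkf : ((k ! : ℝ)) ≠ 0 := by positivity
    have hkn : ((k:ℝ) + n + 1) ≠ 0 := by positivity
    field_simp
    ring

lemma Q_eq_tsum (hα0 : 0 < α) (hα1 : α < 1) (n : ℕ) (x : ℝ) :
    Q α n x = ∑' k : ℕ, (-x) ^ k * pp α n (k+1) / (k ! : ℝ) := by
  have hc : ∀ n, ∀ k : ℕ, |pp α n (k+1)| ≤ 1 := fun n k => pp_abs hα0 hα1 n (k+1)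
  induction n generalizing x with
  | zero =>
    show Real.exp (-x) = _
    rw [exp_neg_eq_tsum]
    apply tsum_congr
    intro k
    rw [pp]
    simp
  | succ n ih =>
    show α * Q α n x + (1 - α) * (n + 1) *
        (∫ t in Set.Ioc (0:ℝ) 1, t ^ (n+1) * Q α n (t * x)) = _
    have hrw : Set.EqOn (fun t : ℝ => t ^ (n+1) * Q α n (t * x))
        (fun t : ℝ => t ^ (n+1) * ∑' k : ℕ, (-(t*x)) ^ k * pp α n (k+1) / (k ! : ℝ))
        (Set.Ioc (0:ℝ) 1) := fun t _ => by simp only [ih]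
    rw [setIntegral_congr_fun measurableSet_Ioc hrw, I_tsum (n+1) (hc n) x, ih x,
      ← tsum_mul_left, ← tsum_mul_left,
      ← Summable.tsum_add ((summable_term hα0 hα1 n x (hc n)).mul_left α)
        ((summable_term' hα0 hα1 (n+1) x (hc n)).mul_left ((1-α) * (n+1)))]
    apply tsum_congr
    intro k
    rw [pp_succ]
    have hk : ((k:ℝ) + 1 + 1 + n) ≠ 0 := by positivity
    have hkf : ((k ! : ℝ)) ≠ 0 := by positivity
    have hkn : ((k:ℝ) + (n+1) + 1) ≠ 0 := by positivity
    push_cast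
    field_simp
    ring

end MLbounds4

namespace MLbounds5
open MLbounds Nat
variable {α : ℝ}

lemma Gamma_interp (hα0 : 0 < α) (hα1 : α < 1) {y : ℝ} (hy : 0 < y) :
    Real.Gamma (y+1) ≤ Real.Gamma (y+α) * (y+α) ^ (1-α) := by
  have hya : 0 < y + α := by linarith
  have hy1a : 0 < y + 1 + α := by linarith
  have key := Real.convexOn_log_Gamma.2 (Set.mem_Ioi.2 hya) (Set.mem_Ioi.2 hy1a)
    hα0.le (by linarith : (0:ℝ) ≤ 1 - α) (by ring)
  simp only [smul_eq_mul, Function.comp_apply] at key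
  have harg : α * (y + α) + (1 - α) * (y + 1 + α) = y + 1 := by ring
  rw [harg] at key
  have hrec : Real.Gamma (y + 1 + α) = (y + α) * Real.Gamma (y + α) := by
    have : y + 1 + α = (y + α) + 1 := by ring
    rw [this, Real.Gamma_add_one hya.ne']
  rw [hrec, Real.log_mul hya.ne' (Real.Gamma_pos_of_pos hya).ne'] at key
  have hG1 : 0 < Real.Gamma (y + 1) := Real.Gamma_pos_of_pos (by linarith)
  have hGa : 0 < Real.Gamma (y + α) := Real.Gamma_pos_of_pos hya
  calc Real.Gamma (y+1) = Real.exp (Real.log (Real.Gamma (y+1))) := (Real.exp_log hG1).symm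
    _ ≤ Real.exp (α * Real.log (Real.Gamma (y+α))
        + (1-α) * (Real.log (y+α) + Real.log (Real.Gamma (y+α)))) := Real.exp_le_exp.2 key
    _ = Real.Gamma (y+α) * (y+α) ^ (1-α) := by
        rw [show α * Real.log (Real.Gamma (y+α))
            + (1-α) * (Real.log (y+α) + Real.log (Real.Gamma (y+α)))
            = Real.log (Real.Gamma (y+α)) + Real.log (y+α) * (1-α) by ring,
          Real.exp_add, Real.exp_log hGa, Real.rpow_def_of_pos hya]

lemma tendsto_ratio_zero (hα0 : 0 < α) (hα1 : α < 1) {β : ℝ} (hβ : 0 < β) :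
    Filter.Tendsto (fun k : ℕ => (α*k+β+α) ^ (1-α) / (α*k+β)) atTop (𝓝 0) := by
  have hu : Filter.Tendsto (fun k : ℕ => α*(k:ℝ)+β+α) atTop atTop := by
    have hu' : Filter.Tendsto (fun k : ℕ => α*(k:ℝ) + (β+α)) atTop atTop :=
      Filter.tendsto_atTop_add_const_right _ _
        ((tendsto_natCast_atTop_atTop (R := ℝ)).const_mul_atTop hα0)
    simpa [← add_assoc] using hu'
  have h0 : Filter.Tendsto (fun k : ℕ => 2 * (α*(k:ℝ)+β+α) ^ (-α)) atTop (𝓝 (2*0)) :=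
    Filter.Tendsto.const_mul 2 ((tendsto_rpow_neg_atTop hα0).comp hu)
  rw [mul_zero] at h0
  apply squeeze_zero' ?_ ?_ h0
  · filter_upwards with k
    have h1 : (0:ℝ) < α*k+β := by positivity
    have h2 : (0:ℝ) < α*k+β+α := by positivity
    positivity
  · filter_upwards [Filter.eventually_ge_atTop 1] with k hk
    have h1 : (0:ℝ) < α*k+β := by positivity
    have h2 : (0:ℝ) < α*k+β+α := by positivity
    have hk1 : (1:ℝ) ≤ (k:ℝ) := by exact_mod_cast hk
    rw [div_le_iff₀ h1]
    have hsplit : (α*(k:ℝ)+β+α) ^ (1-α) = (α*(k:ℝ)+β+α) * (α*(k:ℝ)+β+α) ^ (-α) := by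
      nth_rewrite 2 [← Real.rpow_one (α*(k:ℝ)+β+α)]
      rw [← Real.rpow_add h2]
      norm_num [sub_eq_add_neg]
    rw [hsplit]
    have hv : (0:ℝ) < (α*(k:ℝ)+β+α) ^ (-α) := Real.rpow_pos_of_pos h2 _
    have hu2 : α*(k:ℝ)+β+α ≤ 2*(α*(k:ℝ)+β) := by nlinarith
    nlinarith

lemma summable_ML (hα0 : 0 < α) (hα1 : α < 1) {β : ℝ} (hβ : 0 < β) (x : ℝ) :
    Summable (fun k : ℕ => ((k:ℝ)+1) * |x| ^ k / Real.Gamma (α*k+β)) := by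
  apply summable_of_ratio_norm_eventually_le (r := 1/2) (by norm_num)
  have hev := (tendsto_ratio_zero hα0 hα1 hβ).const_mul (2*|x|)
  rw [mul_zero] at hev
  have hev2 : ∀ᶠ k : ℕ in atTop, 2*|x| * ((α*k+β+α) ^ (1-α) / (α*k+β)) ≤ 1/2 :=
    hev.eventually (eventually_le_nhds (by norm_num : (0:ℝ) < 1/2))
  filter_upwards [hev2] with k hk
  set y : ℝ := α*k+β with hy
  have hy0 : 0 < y := by positivity
  have hG : 0 < Real.Gamma y := Real.Gamma_pos_of_pos hy0
  have hya : 0 < y + α := by linarith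
  set v : ℝ := (y+α) ^ (1-α) with hvdef
  have hv : 0 < v := Real.rpow_pos_of_pos hya _
  have hGa : 0 < Real.Gamma (y+α) := Real.Gamma_pos_of_pos hya
  have h1 : y * Real.Gamma y / v ≤ Real.Gamma (y+α) := by
    rw [div_le_iff₀ hv]
    have := Gamma_interp hα0 hα1 hy0
    rwa [Real.Gamma_add_one hy0.ne'] at this
  have hDpos : 0 < y * Real.Gamma y / v := by positivity
  have hinv : (Real.Gamma (y+α))⁻¹ ≤ v / (y * Real.Gamma y) := by
    have h2 := inv_anti₀ hDpos h1
    rwa [inv_div] at h2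
  have harg : α*((k:ℕ)+1:ℝ)+β = y + α := by rw [hy]; push_cast; ring
  have hnorm1 : ‖((k:ℝ)+1+1) * |x| ^ (k+1) / Real.Gamma (y+α)‖
      = ((k:ℝ)+1+1) * |x| ^ (k+1) / Real.Gamma (y+α) := by
    rw [Real.norm_eq_abs, abs_of_nonneg (by positivity)]
  have step1 : ((k:ℝ)+1+1) * |x| ^ (k+1) / Real.Gamma (y+α)
      ≤ ((k:ℝ)+1+1) * |x| ^ (k+1) * (v / (y * Real.Gamma y)) := by
    rw [div_eq_mul_inv]
    exact mul_le_mul_of_nonneg_left hinv (by positivity)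
  have step2 : ((k:ℝ)+1+1) * |x| ^ (k+1) * (v / (y * Real.Gamma y))
      ≤ 1/2 * (((k:ℝ)+1) * |x| ^ k / Real.Gamma y) := by
    have hw : (0:ℝ) ≤ v / y := by positivity
    have hu : (0:ℝ) ≤ |x| ^ k / Real.Gamma y := by positivity
    have hK : (0:ℝ) ≤ (k:ℝ) := Nat.cast_nonneg k
    have hk' : 2 * |x| * (v / y) ≤ 1/2 := hk
    have heq : ((k:ℝ)+1+1) * |x| ^ (k+1) * (v / (y * Real.Gamma y))
        = ((k:ℝ)+2) * |x| * (v/y) * (|x| ^ k / Real.Gamma y) := by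
      rw [pow_succ]
      field_simp
      ring
    have heq2 : 1/2 * (((k:ℝ)+1) * |x| ^ k / Real.Gamma y)
        = 1/2 * ((k:ℝ)+1) * (|x| ^ k / Real.Gamma y) := by
      field_simp
    rw [heq, heq2]
    have hprod := mul_le_mul_of_nonneg_right hk'
      (mul_nonneg (by linarith : (0:ℝ) ≤ (k:ℝ)+1) hu)
    nlinarith [mul_nonneg (mul_nonneg (abs_nonneg x) hw) hu]
  -- assemble
  have hnormk : ‖((k:ℝ)+1) * |x| ^ k / Real.Gamma y‖ = ((k:ℝ)+1) * |x| ^ k / Real.Gamma y := by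
    rw [Real.norm_eq_abs, abs_of_nonneg (by positivity)]
  push_cast
  rw [harg, hnorm1, hnormk]
  linarith [step1, step2]

end MLbounds5

namespace MLbounds6
open MLbounds Nat
variable {α : ℝ}

noncomputable def mseq (α : ℝ) (n k : ℕ) : ℝ := (n:ℝ) ^ ((1-α)*(k:ℝ)) * pp α (n+1) k

lemma mseq_pos (hα0 : 0 < α) {n : ℕ} (hn : 1 ≤ n) (k : ℕ) : 0 < mseq α n k := by
  have hn0 : (0:ℝ) < n := by exact_mod_cast hn
  exact mul_pos (Real.rpow_pos_of_pos hn0 _) (pp_pos hα0 _ _)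

lemma mseq_eq_ratio (hα0 : 0 < α) {n : ℕ} (hn : 1 ≤ n) (k : ℕ) :
    mseq α n k = Real.GammaSeq ((k:ℝ)+1) n / Real.GammaSeq (α*k+1) n := by
  have hn0 : (0:ℝ) < n := by exact_mod_cast hn
  rw [Real.GammaSeq, Real.GammaSeq, mseq, pp, Finset.prod_div_distrib]
  have hPB : (∏ j ∈ Finset.range (n+1), ((k:ℝ)+1+j)) ≠ 0 :=
    Finset.prod_ne_zero_iff.2 fun j _ => by positivity
  have hPA : (∏ j ∈ Finset.range (n+1), (α*(k:ℝ)+1+j)) ≠ 0 :=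
    Finset.prod_ne_zero_iff.2 fun j _ => by positivity
  have hfact : ((n ! : ℕ) : ℝ) ≠ 0 := by positivity
  have hr : (n:ℝ) ^ ((1-α)*(k:ℝ)) = (n:ℝ) ^ ((k:ℝ)+1) / (n:ℝ) ^ (α*(k:ℝ)+1) := by
    rw [← Real.rpow_sub hn0]
    congr 1
    ring
  have hrB : ((n:ℝ) ^ ((k:ℝ)+1)) ≠ 0 := (Real.rpow_pos_of_pos hn0 _).ne'
  have hrA : ((n:ℝ) ^ (α*(k:ℝ)+1)) ≠ 0 := (Real.rpow_pos_of_pos hn0 _).ne'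
  rw [hr]
  field_simp

lemma mseq_tendsto (hα0 : 0 < α) (k : ℕ) :
    Filter.Tendsto (fun n => mseq α n k) atTop
      (𝓝 (Real.Gamma ((k:ℝ)+1) / Real.Gamma (α*k+1))) := by
  have hpos : (0:ℝ) < α*k+1 := by positivity
  have h := (Real.GammaSeq_tendsto_Gamma ((k:ℝ)+1)).div
    (Real.GammaSeq_tendsto_Gamma (α*k+1)) (Real.Gamma_pos_of_pos hpos).ne'
  apply h.congr'
  filter_upwards [Filter.eventually_ge_atTop 1] with n hn
  exact (mseq_eq_ratio hα0 hn k).symm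

lemma mseq_succ_le (hα0 : 0 < α) (hα1 : α < 1) {n : ℕ} (hn : 1 ≤ n) (k : ℕ) :
    mseq α n k ≤ mseq α (n+1) k := by
  have hn0 : (0:ℝ) < n := by exact_mod_cast hn
  have hn1 : (0:ℝ) < (n:ℝ)+1 := by linarith
  set c : ℝ := (1-α)*(k:ℝ) with hc
  have hc0 : 0 ≤ c := mul_nonneg (by linarith) (Nat.cast_nonneg k)
  set A : ℝ := α*(k:ℝ)+1+(n+1) with hA
  set B : ℝ := (k:ℝ)+1+(n+1) with hB
  have hApos : 0 < A := by rw [hA]; positivity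
  have hBpos : 0 < B := by rw [hB]; positivity
  have hAn : (n:ℝ)+1 ≤ A := by rw [hA]; nlinarith [Nat.cast_nonneg (α := ℝ) k]
  have hBA : B = A + c := by rw [hB, hA, hc]; ring
  -- log bound
  have hlog : 1/((n:ℝ)+1) ≤ Real.log (((n:ℝ)+1)/n) := by
    have h1 : Real.log ((n:ℝ)/((n:ℝ)+1)) ≤ (n:ℝ)/((n:ℝ)+1) - 1 :=
      Real.log_le_sub_one_of_pos (by positivity)
    have h2 : (n:ℝ)/((n:ℝ)+1) - 1 = -(1/((n:ℝ)+1)) := by field_simp; ring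
    have h3 : Real.log (((n:ℝ)+1)/(n:ℝ)) = - Real.log ((n:ℝ)/((n:ℝ)+1)) := by
      rw [← Real.log_inv, inv_div]
    linarith
  have hexp : (((n:ℝ)+1)/n) ^ c = Real.exp (Real.log (((n:ℝ)+1)/n) * c) :=
    Real.rpow_def_of_pos (by positivity) c
  have h4 : Real.log (((n:ℝ)+1)/n) * c + 1 ≤ Real.exp (Real.log (((n:ℝ)+1)/n) * c) :=
    Real.add_one_le_exp _
  have h5 : c/A ≤ c/((n:ℝ)+1) :=
    div_le_div_of_nonneg_left hc0 hn1 hAn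
  have h6 : B/A ≤ (((n:ℝ)+1)/n) ^ c := by
    rw [hexp]
    have h7 : B/A = 1 + c/A := by
      rw [hBA]
      field_simp
    have h8 : c/((n:ℝ)+1) ≤ Real.log (((n:ℝ)+1)/n) * c := by
      rw [div_eq_mul_inv, mul_comm]
      exact mul_le_mul_of_nonneg_right hlog hc0 |>.trans_eq (by ring) |>.trans_eq' (by ring)
    linarith
  -- convert to the rpow quotient
  have h9 : (((n:ℝ)+1)/n) ^ c = ((n:ℝ)+1) ^ c / (n:ℝ) ^ c :=
    Real.div_rpow (by linarith : (0:ℝ) ≤ (n:ℝ)+1) hn0.le c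
  have h10 : (n:ℝ) ^ c * B ≤ ((n:ℝ)+1) ^ c * A := by
    have hnc : 0 < (n:ℝ) ^ c := Real.rpow_pos_of_pos hn0 _
    rw [h9] at h6
    rw [div_le_div_iff₀ hApos hnc] at h6
    linarith
  -- final assembly
  show (n:ℝ) ^ c * pp α (n+1) k ≤ ((n+1:ℕ):ℝ) ^ c * pp α (n+2) k
  conv_rhs => rw [pp_succ]
  have hpp : 0 < pp α (n+1) k := pp_pos hα0 _ _
  have hfrac : (n:ℝ) ^ c ≤ ((n:ℝ)+1) ^ c * (A/B) := by
    have heq : (n:ℝ) ^ c = ((n:ℝ) ^ c * B)/B := by field_simp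
    rw [heq, div_le_iff₀ hBpos]
    calc (n:ℝ) ^ c * B ≤ ((n:ℝ)+1) ^ c * A := h10
      _ = ((n:ℝ)+1) ^ c * (A/B) * B := by field_simp
  calc (n:ℝ) ^ c * pp α (n+1) k ≤ (((n:ℝ)+1) ^ c * (A/B)) * pp α (n+1) k :=
        mul_le_mul_of_nonneg_right hfrac hpp.le
    _ = ((n+1:ℕ):ℝ) ^ c * (pp α (n+1) k * ((α*k+1+(n+1:ℕ))/((k:ℝ)+1+(n+1:ℕ)))) := by
        push_cast
        ring

lemma mseq_le_Gamma (hα0 : 0 < α) (hα1 : α < 1) {n : ℕ} (hn : 1 ≤ n) (k : ℕ) :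
    mseq α n k ≤ Real.Gamma ((k:ℝ)+1) / Real.Gamma (α*k+1) := by
  apply ge_of_tendsto (mseq_tendsto hα0 k)
  filter_upwards [Filter.eventually_ge_atTop n] with N hN
  induction N, hN using Nat.le_induction with
  | base => exact le_rfl
  | succ N hNN ih => exact ih.trans (mseq_succ_le hα0 hα1 (le_trans hn hNN) k)

end MLbounds6

namespace MLfinal
open MLbounds MLbounds2 MLbounds3 MLbounds4 MLbounds5 MLbounds6 Nat Filter
variable {α : ℝ}

lemma pp_k0 (n : ℕ) : pp α n 0 = 1 := by
  rw [pp]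
  apply Finset.prod_eq_one
  intro j _
  rw [Nat.cast_zero, mul_zero, zero_add, div_self (by positivity)]

lemma P_zero (hα0 : 0 < α) (hα1 : α < 1) (n : ℕ) : P α n 0 = 1 := by
  rw [P_eq_tsum hα0 hα1 n 0, tsum_eq_single 0 ?_]
  · simp [pp_k0]
  · intro k hk
    simp [zero_pow hk]

lemma Q_zero_val (hα0 : 0 < α) (hα1 : α < 1) (n : ℕ) : Q α n 0 = pp α n 1 := by
  rw [Q_eq_tsum hα0 hα1 n 0, tsum_eq_single 0 ?_]
  · simp
  · intro k hk
    simp [zero_pow hk]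

lemma P_arg_eq (hα0 : 0 < α) (hα1 : α < 1) (x : ℝ) (n : ℕ) :
    P α (n+1) ((n:ℝ) ^ (1-α) * x) = ∑' k : ℕ, (-x) ^ k * mseq α n k / (k ! : ℝ) := by
  rw [P_eq_tsum hα0 hα1 (n+1)]
  apply tsum_congr
  intro k
  rw [mseq]
  have h1 : (-((n:ℝ) ^ (1-α) * x)) ^ k = (n:ℝ) ^ ((1-α)*(k:ℝ)) * (-x) ^ k := by
    rw [show -((n:ℝ) ^ (1-α) * x) = (n:ℝ) ^ (1-α) * (-x) by ring, mul_pow,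
      ← Real.rpow_natCast ((n:ℝ) ^ (1-α)) k, ← Real.rpow_mul (Nat.cast_nonneg n)]
  rw [h1]
  ring

lemma tendsto_ML1 (hα0 : 0 < α) (hα1 : α < 1) {x : ℝ} (hx : 0 ≤ x) :
    Tendsto (fun n : ℕ => P α (n+1) ((n:ℝ) ^ (1-α) * x)) atTop
      (𝓝 (mittagLeffler α 1 (-x))) := by
  have habs : |x| = x := abs_of_nonneg hx
  have hML : mittagLeffler α 1 (-x)
      = ∑' k : ℕ, (-x) ^ k * (Real.Gamma ((k:ℝ)+1) / Real.Gamma (α*k+1)) / (k ! : ℝ) := by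
    rw [mittagLeffler]
    apply tsum_congr
    intro k
    rw [Real.Gamma_nat_eq_factorial]
    have h2 : (0:ℝ) < Real.Gamma (α*k+1) := Real.Gamma_pos_of_pos (by positivity)
    field_simp
  simp only [P_arg_eq hα0 hα1 x, hML]
  apply tendsto_tsum_of_dominated_convergence
    (bound := fun k : ℕ => x ^ k / Real.Gamma (α*k+1))
  · apply Summable.of_nonneg_of_le ?_ ?_ (summable_ML hα0 hα1 one_pos x)
    · intro k
      have h2 : (0:ℝ) < Real.Gamma (α*k+1) := Real.Gamma_pos_of_pos (by positivity)
      positivity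
    · intro k
      have h2 : (0:ℝ) < Real.Gamma (α*k+1) := Real.Gamma_pos_of_pos (by positivity)
      apply div_le_div_of_nonneg_right ?_ h2.le
      rw [habs]
      nlinarith [pow_nonneg hx k, Nat.cast_nonneg (α := ℝ) k]
  · intro k
    exact ((mseq_tendsto hα0 k).const_mul _).div_const _
  · filter_upwards [eventually_ge_atTop 1] with n hn
    intro k
    have h2 : (0:ℝ) < Real.Gamma (α*k+1) := Real.Gamma_pos_of_pos (by positivity)
    have h3 := mseq_le_Gamma hα0 hα1 hn k
    have h4 := (mseq_pos hα0 hn k).le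
    rw [Real.norm_eq_abs, abs_div, abs_mul, abs_pow, abs_neg, habs,
      abs_of_nonneg h4, Nat.abs_cast]
    rw [Real.Gamma_nat_eq_factorial] at h3
    have h5 : (0:ℝ) < (k ! : ℝ) := by positivity
    rw [div_le_div_iff₀ h5 h2]
    have h6 : x ^ k * mseq α n k * Real.Gamma (α*k+1) ≤
        x ^ k * ((k ! : ℝ) / Real.Gamma (α*k+1)) * Real.Gamma (α*k+1) := by
      have := mul_le_mul_of_nonneg_left h3 (pow_nonneg hx k)
      exact mul_le_mul_of_nonneg_right (by linarith) h2.le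
    calc x ^ k * mseq α n k * Real.Gamma (α*k+1)
        ≤ x ^ k * ((k ! : ℝ) / Real.Gamma (α*k+1)) * Real.Gamma (α*k+1) := h6
      _ = x ^ k * (k ! : ℝ) := by field_simp

end MLfinal

namespace MLfinal2
open MLbounds MLbounds2 MLbounds3 MLbounds4 MLbounds5 MLbounds6 MLfinal Nat Filter
variable {α : ℝ}

lemma coeff2 (hα0 : 0 < α) (k : ℕ) :
    α * (Real.Gamma (((k+1:ℕ):ℝ)+1) / Real.Gamma (α*((k+1:ℕ):ℝ)+1)) / (k ! : ℝ)
      = 1 / Real.Gamma (α*k+α) := by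
  have hpos : (0:ℝ) < α*k+α := by positivity
  have hG : 0 < Real.Gamma (α*k+α) := Real.Gamma_pos_of_pos hpos
  have h1 : Real.Gamma (((k+1:ℕ):ℝ)+1) = ((k+1)! : ℝ) := Real.Gamma_nat_eq_factorial (k+1)
  have h2 : α*((k+1:ℕ):ℝ)+1 = (α*k+α)+1 := by push_cast; ring
  rw [h1, h2, Real.Gamma_add_one hpos.ne', Nat.factorial_succ]
  have hkf : ((k !:ℕ):ℝ) ≠ 0 := by positivity
  push_cast
  field_simp

lemma Q_arg_eq (hα0 : 0 < α) (hα1 : α < 1) (x : ℝ) {n : ℕ} (hn : 1 ≤ n) :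
    α * (n:ℝ) ^ (1-α) * Q α (n+1) ((n:ℝ) ^ (1-α) * x)
      = ∑' k : ℕ, (-x) ^ k * (α * mseq α n (k+1)) / (k ! : ℝ) := by
  have hn0 : (0:ℝ) < n := by exact_mod_cast hn
  rw [Q_eq_tsum hα0 hα1 (n+1), ← tsum_mul_left]
  apply tsum_congr
  intro k
  have h1 : (-((n:ℝ) ^ (1-α) * x)) ^ k = (n:ℝ) ^ ((1-α)*(k:ℝ)) * (-x) ^ k := by
    rw [show -((n:ℝ) ^ (1-α) * x) = (n:ℝ) ^ (1-α) * (-x) by ring, mul_pow,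
      ← Real.rpow_natCast ((n:ℝ) ^ (1-α)) k, ← Real.rpow_mul (Nat.cast_nonneg n)]
  rw [h1, mseq]
  push_cast
  rw [show (1-α)*((k:ℝ)+1) = (1-α) + (1-α)*(k:ℝ) by ring, Real.rpow_add hn0]
  ring

lemma tendsto_ML2 (hα0 : 0 < α) (hα1 : α < 1) {x : ℝ} (hx : 0 ≤ x) :
    Tendsto (fun n : ℕ => α * (n:ℝ) ^ (1-α) * Q α (n+1) ((n:ℝ) ^ (1-α) * x)) atTop
      (𝓝 (mittagLeffler α α (-x))) := by
  have habs : |x| = x := abs_of_nonneg hx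
  have hML : mittagLeffler α α (-x)
      = ∑' k : ℕ, (-x) ^ k * (α * (Real.Gamma (((k+1:ℕ):ℝ)+1)
          / Real.Gamma (α*((k+1:ℕ):ℝ)+1))) / (k ! : ℝ) := by
    rw [mittagLeffler]
    apply tsum_congr
    intro k
    rw [mul_div_assoc, coeff2 hα0 k, mul_one_div]
  rw [hML]
  have key : Tendsto (fun n : ℕ => ∑' k : ℕ, (-x) ^ k * (α * mseq α n (k+1)) / (k ! : ℝ))
      atTop (𝓝 (∑' k : ℕ, (-x) ^ k * (α * (Real.Gamma (((k+1:ℕ):ℝ)+1)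
          / Real.Gamma (α*((k+1:ℕ):ℝ)+1))) / (k ! : ℝ))) := by
    apply tendsto_tsum_of_dominated_convergence
      (bound := fun k : ℕ => x ^ k / Real.Gamma (α*k+α))
    · apply Summable.of_nonneg_of_le ?_ ?_ (summable_ML hα0 hα1 hα0 x)
      · intro k
        have h2 : (0:ℝ) < Real.Gamma (α*k+α) := Real.Gamma_pos_of_pos (by positivity)
        positivity
      · intro k
        have h2 : (0:ℝ) < Real.Gamma (α*k+α) := Real.Gamma_pos_of_pos (by positivity)
        apply div_le_div_of_nonneg_right ?_ h2.le
        rw [habs]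
        nlinarith [pow_nonneg hx k, Nat.cast_nonneg (α := ℝ) k]
    · intro k
      exact (((mseq_tendsto hα0 (k+1)).const_mul α).const_mul ((-x) ^ k)).div_const _
    · filter_upwards [eventually_ge_atTop 1] with n hn
      intro k
      have hpos : (0:ℝ) < α*k+α := by positivity
      have h2 : (0:ℝ) < Real.Gamma (α*k+α) := Real.Gamma_pos_of_pos hpos
      have h3 := mseq_le_Gamma hα0 hα1 hn (k+1)
      have h4 := (mseq_pos hα0 hn (k+1)).le
      have h5 : (0:ℝ) < (k ! : ℝ) := by positivity
      rw [Real.norm_eq_abs, abs_div, abs_mul, abs_pow, abs_neg, habs,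
        abs_of_nonneg (by positivity : (0:ℝ) ≤ α * mseq α n (k+1)), Nat.abs_cast]
      have h6 : x ^ k * (α * mseq α n (k+1)) / (k ! : ℝ)
          ≤ x ^ k * (α * (Real.Gamma (((k+1:ℕ):ℝ)+1) / Real.Gamma (α*((k+1:ℕ):ℝ)+1)))
              / (k ! : ℝ) := by
        apply div_le_div_of_nonneg_right ?_ h5.le
        apply mul_le_mul_of_nonneg_left ?_ (pow_nonneg hx k)
        exact mul_le_mul_of_nonneg_left h3 hα0.le
      refine h6.trans ?_
      rw [mul_div_assoc, coeff2 hα0 k, mul_one_div]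
  apply key.congr'
  filter_upwards [eventually_ge_atTop 1] with n hn
  exact (Q_arg_eq hα0 hα1 x hn).symm

end MLfinal2


open MLbounds MLbounds2 MLbounds3 MLbounds4 MLbounds5 MLbounds6 MLfinal MLfinal2 Filter

/-- For `0 < α < 1` and every `x ≥ 0`:
`0 ≤ E_{α,1}(-x) ≤ 1` and `0 ≤ E_{α,α}(-x) ≤ α Γ(2)/Γ(1+α) = α/Γ(1+α)`. -/
theorem mittagLeffler_contraction_bounds (α : ℝ) (hα0 : 0 < α) (hα1 : α < 1)
    (x : ℝ) (hx : 0 ≤ x) :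
    0 ≤ mittagLeffler α 1 (-x) ∧ mittagLeffler α 1 (-x) ≤ 1 ∧
    0 ≤ mittagLeffler α α (-x) ∧
    mittagLeffler α α (-x) ≤ α * Real.Gamma 2 / Real.Gamma (1 + α) ∧
    α * Real.Gamma 2 / Real.Gamma (1 + α) = α / Real.Gamma (1 + α) := by
  have hT1 := tendsto_ML1 hα0 hα1 hx
  have hT2 := tendsto_ML2 hα0 hα1 hx
  have hy : ∀ n : ℕ, (0:ℝ) ≤ (n:ℝ) ^ (1-α) * x :=
    fun n => mul_nonneg (Real.rpow_nonneg (Nat.cast_nonneg n) _) hx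
  refine ⟨?_, ?_, ?_, ?_, ?_⟩
  · apply ge_of_tendsto' hT1
    intro n
    exact ((P_props hα0 hα1 (n+1)).2.1 _).1
  · apply le_of_tendsto hT1
    filter_upwards with n
    calc P α (n+1) ((n:ℝ) ^ (1-α) * x) ≤ P α (n+1) 0 :=
          (P_props hα0 hα1 (n+1)).2.2 (hy n)
      _ = 1 := P_zero hα0 hα1 (n+1)
  · apply ge_of_tendsto' hT2
    intro n
    have h1 := ((Q_props hα0 hα1 (n+1)).2.1 ((n:ℝ) ^ (1-α) * x)).1
    have h2 : (0:ℝ) ≤ (n:ℝ) ^ (1-α) := Real.rpow_nonneg (Nat.cast_nonneg n) _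
    positivity
  · apply le_of_tendsto hT2
    filter_upwards [eventually_ge_atTop 1] with n hn
    have h2 : (0:ℝ) ≤ (n:ℝ) ^ (1-α) := Real.rpow_nonneg (Nat.cast_nonneg n) _
    have hanti : Q α (n+1) ((n:ℝ) ^ (1-α) * x) ≤ Q α (n+1) 0 :=
      (Q_props hα0 hα1 (n+1)).2.2 (hy n)
    rw [Q_zero_val hα0 hα1 (n+1)] at hanti
    have hm : (n:ℝ) ^ (1-α) * pp α (n+1) 1 = mseq α n 1 := by
      rw [mseq]
      norm_num
    have hle := mseq_le_Gamma hα0 hα1 hn 1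
    have hc1 : ((1:ℕ):ℝ) + 1 = 2 := by norm_num
    have hc2 : α * ((1:ℕ):ℝ) + 1 = 1 + α := by push_cast; ring
    rw [hc1, hc2] at hle
    calc α * (n:ℝ) ^ (1-α) * Q α (n+1) ((n:ℝ) ^ (1-α) * x)
        ≤ α * (n:ℝ) ^ (1-α) * pp α (n+1) 1 := by
          apply mul_le_mul_of_nonneg_left hanti (by positivity)
      _ = α * mseq α n 1 := by rw [mul_assoc, hm]
      _ ≤ α * (Real.Gamma 2 / Real.Gamma (1+α)) := mul_le_mul_of_nonneg_left hle hα0.le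
      _ = α * Real.Gamma 2 / Real.Gamma (1+α) := by ring
  · rw [Real.Gamma_two, mul_one]
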